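/- Lemma 5.3 (second forbidden gap): there exist β* ∈ (π, 5) and u* ∈ (0,1) such that g(u*, β*) = 0, while g(u,β) > 0 for all u ∈ [0,1] and all β ∈ (π, β*). In particular, the equation g(u,β) = 0 has no roots u ∈ [0,1] for any β strictly between π and β*. -/

import Mathlib

set_option maxHeartbeats 2000000

open Real

lemma exp_poly_lb {y : ℝ} (h0 : 0 ≤ y) (h1 : y ≤ 1) :
    1 + y + y^2/2 + y^3/6 + y^4/24 + y^5/120 - 7*y^6/4320 ≤ Real.exp y := by
  have hb := Real.exp_bound (x := y) (by rw [abs_of_nonneg h0]; exact h1) (n := 6) (by norm_num)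
  have hs : ∑ i ∈ Finset.range 6, y ^ i / (Nat.factorial i : ℝ)
      = 1 + y + y^2/2 + y^3/6 + y^4/24 + y^5/120 := by
    simp [Finset.sum_range_succ, Nat.factorial]
    try ring
  rw [hs, abs_of_nonneg h0] at hb
  have h2 := abs_le.mp hb
  have h3 : y ^ 6 * ((Nat.succ 6 : ℝ) / ((Nat.factorial 6 : ℝ) * 6)) = 7*y^6/4320 := by
    norm_num [Nat.factorial]
    try ring
  linarith [h2.1, h2.2, h3.le, h3.ge]

lemma exp_poly_ub {y : ℝ} (h0 : 0 ≤ y) (h1 : y ≤ 1) :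
    Real.exp y ≤ 1 + y + y^2/2 + y^3/6 + y^4/24 + y^5/120 + 7*y^6/4320 := by
  have hb := Real.exp_bound (x := y) (by rw [abs_of_nonneg h0]; exact h1) (n := 6) (by norm_num)
  have hs : ∑ i ∈ Finset.range 6, y ^ i / (Nat.factorial i : ℝ)
      = 1 + y + y^2/2 + y^3/6 + y^4/24 + y^5/120 := by
    simp [Finset.sum_range_succ, Nat.factorial]
    try ring
  rw [hs, abs_of_nonneg h0] at hb
  have h2 := abs_le.mp hb
  have h3 : y ^ 6 * ((Nat.succ 6 : ℝ) / ((Nat.factorial 6 : ℝ) * 6)) = 7*y^6/4320 := by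
    norm_num [Nat.factorial]
    try ring
  linarith [h2.1, h2.2, h3.le, h3.ge]

lemma exp_eq_pow4 (x : ℝ) : Real.exp x = (Real.exp (x/4))^4 := by
  rw [← Real.exp_nat_mul]
  norm_num
  ring

lemma exp_lb4 {x : ℝ} (h0 : 0 ≤ x) (h4 : x ≤ 4) :
    (1 + x/4 + (x/4)^2/2 + (x/4)^3/6 + (x/4)^4/24 + (x/4)^5/120 - 7*(x/4)^6/4320)^4
      ≤ Real.exp x := by
  set y := x/4 with hy
  have hy0 : 0 ≤ y := by positivity
  have hy1 : y ≤ 1 := by rw [hy]; linarith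
  have hplb := exp_poly_lb hy0 hy1
  have hpnn : 0 ≤ 1 + y + y^2/2 + y^3/6 + y^4/24 + y^5/120 - 7*y^6/4320 := by
    have h6 : y^6 ≤ 1 := pow_le_one₀ hy0 hy1
    nlinarith [pow_nonneg hy0 2, pow_nonneg hy0 3, pow_nonneg hy0 4, pow_nonneg hy0 5]
  calc (1 + y + y^2/2 + y^3/6 + y^4/24 + y^5/120 - 7*y^6/4320)^4
      ≤ (Real.exp y)^4 := pow_le_pow_left₀ hpnn hplb 4
    _ = Real.exp x := (exp_eq_pow4 x).symm

lemma exp_ub4 {x : ℝ} (h0 : 0 ≤ x) (h4 : x ≤ 4) :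
    Real.exp x ≤ (1 + x/4 + (x/4)^2/2 + (x/4)^3/6 + (x/4)^4/24 + (x/4)^5/120 + 7*(x/4)^6/4320)^4 := by
  set y := x/4 with hy
  have hy0 : 0 ≤ y := by positivity
  have hy1 : y ≤ 1 := by rw [hy]; linarith
  rw [exp_eq_pow4 x]
  exact pow_le_pow_left₀ (Real.exp_nonneg _) (exp_poly_ub hy0 hy1) 4

lemma cosh_ub4 {x C : ℝ} (h0 : 0 ≤ x) (h4 : x ≤ 4)
    (hC : (1 + x/4 + (x/4)^2/2 + (x/4)^3/6 + (x/4)^4/24 + (x/4)^5/120 + 7*(x/4)^6/4320)^4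
        ≤ 2*C - 1) :
    Real.cosh x ≤ C := by
  rw [Real.cosh_eq]
  have h1 : Real.exp (-x) ≤ 1 := by
    rw [Real.exp_le_one_iff]; linarith
  have h2 := exp_ub4 h0 h4
  linarith

lemma sinh_lb4 {x S : ℝ} (h0 : 0 ≤ x) (h4 : x ≤ 4)
    (hS : 2*S + 1 ≤ (1 + x/4 + (x/4)^2/2 + (x/4)^3/6 + (x/4)^4/24 + (x/4)^5/120 - 7*(x/4)^6/4320)^4) :
    S ≤ Real.sinh x := by
  rw [Real.sinh_eq]
  have h1 : Real.exp (-x) ≤ 1 := by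
    rw [Real.exp_le_one_iff]; linarith
  have h2 := exp_lb4 h0 h4
  linarith

lemma sinh_ub4 {x S : ℝ} (h0 : 0 ≤ x) (h4 : x ≤ 4)
    (hS : (1 + x/4 + (x/4)^2/2 + (x/4)^3/6 + (x/4)^4/24 + (x/4)^5/120 + 7*(x/4)^6/4320)^4 ≤ 2*S) :
    Real.sinh x ≤ S := by
  rw [Real.sinh_eq]
  have h1 : 0 < Real.exp (-x) := Real.exp_pos _
  have h2 := exp_ub4 h0 h4
  linarith

/-- The function `g(u,β)` whose roots `u ∈ (0,1)` determine the spectral singularities of the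
PT-symmetric waveguide with gain-and-loss amplitude `γ = β²/2`. (Note that for `u = 0` the
formula evaluates to `1`, the limit value as `u → 0⁺`, since in Lean `β/0 = 0`.) -/
noncomputable def g (u β : ℝ) : ℝ :=
  u^4 * (1 - u^4) * Real.cosh (β * u) * Real.cos (β / u)
    - 2 * u^6 * Real.sinh (β * u) * Real.sin (β / u) + 1 - u^12

lemma boxM2 (u1 u2 c C S : ℝ)
    (hu1half : (1/2:ℝ) ≤ u1) (hu12 : u1 ≤ u2) (hu2lt : u2 < 1)
    (hc0 : 0 < c) (hc1 : c ≤ 1) (hcle : c ≤ 3.141592 * (1 - u2) / u2)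
    (hxhi : 3.15 / u1 ≤ 4.712388)
    (hSpos : 0 ≤ S)
    (hC : Real.cosh (3.15 * u2) ≤ C)
    (hS : S ≤ Real.sinh (3.141592 * u1))
    (hfin : 0 < 1 - u2^12 - u2^4 * (1 - u1^4) * C + 2 * u1^6 * S * (c - c^3/4))
    (u β : ℝ) (hu : u1 ≤ u) (hu' : u ≤ u2) (hb : π ≤ β) (hb' : β ≤ 3.15) :
    0 < g u β := by
  have hπl : (3.141592:ℝ) < π := Real.pi_gt_d6
  have hπu : π < 3.141593 := Real.pi_lt_d6
  have hu10 : (0:ℝ) < u1 := by linarith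
  have hu0 : (0:ℝ) < u := by linarith
  have hu20 : (0:ℝ) < u2 := by linarith
  obtain ⟨x, hβu⟩ : ∃ x, β / u = x + π := ⟨β / u - π, by ring⟩
  have hx_lo : c ≤ x := by
    have h1 : π / u ≤ β / u := by gcongr
    have h2 : π / u2 ≤ π / u := by gcongr
    have h3 : 3.141592 * (1 - u2) / u2 ≤ π * (1 - u2) / u2 := by gcongr
    have h4 : π * (1 - u2) / u2 = π / u2 - π := by field_simp
    linarith
  have hx_hi : x ≤ π / 2 := by
    have h1 : β / u ≤ 3.15 / u1 := by gcongr
    linarith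
  have hx0 : 0 < x := lt_of_lt_of_le hc0 hx_lo
  have hsθ : Real.sin (β / u) = -Real.sin x := by rw [hβu]; exact Real.sin_add_pi x
  have hcθ : Real.cos (β / u) = -Real.cos x := by rw [hβu]; exact Real.cos_add_pi x
  have hsx : c - c^3/4 ≤ Real.sin x := by
    have h1 : Real.sin c ≤ Real.sin x :=
      Real.strictMonoOn_sin.monotoneOn (Set.mem_Icc.mpr ⟨by linarith, by linarith⟩)
        (Set.mem_Icc.mpr ⟨by linarith, by linarith⟩) hx_lo
    have h2 := Real.sin_gt_sub_cube hc0
    linarith [pow_nonneg hc0.le 3]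
  have hsc0 : 0 ≤ c - c^3/4 := by
    nlinarith [mul_nonneg (mul_nonneg hc0.le (sub_nonneg.mpr hc1)) (by linarith : (0:ℝ) ≤ 1 + c)]
  have hβ0 : (0:ℝ) ≤ β := by linarith
  have hch : Real.cosh (β * u) ≤ C := by
    refine le_trans ?_ hC
    rw [Real.cosh_le_cosh, abs_of_nonneg (by positivity), abs_of_nonneg (by positivity)]
    apply mul_le_mul hb' hu' hu0.le (by norm_num)
  have hsh : S ≤ Real.sinh (β * u) := by
    refine le_trans hS ?_
    rw [Real.sinh_le_sinh]
    nlinarith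
  have hshn : (0:ℝ) ≤ Real.sinh (β * u) := le_trans hSpos hsh
  have h12 : u^12 ≤ u2^12 := pow_le_pow_left₀ hu0.le hu' 12
  have hu41 : u^4 ≤ 1 := pow_le_one₀ hu0.le (by linarith)
  have h1 : (0:ℝ) ≤ 1 - u^4 := by linarith
  have h2 : u^4 ≤ u2^4 := pow_le_pow_left₀ hu0.le hu' 4
  have h3 : 1 - u^4 ≤ 1 - u1^4 := by
    have := pow_le_pow_left₀ hu10.le hu 4; linarith
  have hu141 : u1^4 ≤ 1 := pow_le_one₀ hu10.le (by linarith)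
  have h4 : (0:ℝ) ≤ u2^4 * (1 - u1^4) :=
    mul_nonneg (by positivity) (by linarith)
  have hA : u^4 * (1 - u^4) * Real.cosh (β * u) ≤ u2^4 * (1 - u1^4) * C :=
    mul_le_mul (mul_le_mul h2 h3 h1 (by positivity)) hch (Real.cosh_pos _).le h4
  have hApos : 0 ≤ u^4 * (1 - u^4) * Real.cosh (β * u) := by
    have h2' := (Real.cosh_pos (β * u)).le
    positivity
  have hterm1 : -(u2^4 * (1 - u1^4) * C)
      ≤ u^4 * (1 - u^4) * Real.cosh (β * u) * (-Real.cos x) := by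
    have hh : u^4 * (1 - u^4) * Real.cosh (β * u) * Real.cos x
        ≤ u^4 * (1 - u^4) * Real.cosh (β * u) :=
      mul_le_of_le_one_right hApos (Real.cos_le_one x)
    nlinarith
  have hterm2 : 2 * u1^6 * S * (c - c^3/4) ≤ 2 * u^6 * Real.sinh (β * u) * Real.sin x := by
    have h6 : u1^6 ≤ u^6 := pow_le_pow_left₀ hu10.le hu 6
    have m1 : 2 * u1^6 ≤ 2 * u^6 := by linarith
    have m2 : 2 * u1^6 * S ≤ 2 * u^6 * Real.sinh (β * u) :=
      mul_le_mul m1 hsh hSpos (by positivity)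
    exact mul_le_mul m2 hsx hsc0 (mul_nonneg (by positivity) hshn)
  unfold g
  rw [hsθ, hcθ]
  nlinarith [hterm1, hterm2, h12, hfin]

lemma boxM1 (u1 u2 C : ℝ)
    (hu1half : (1/2:ℝ) ≤ u1) (hu12 : u1 ≤ u2) (hu2lt : u2 < 1)
    (h2pi : 3.15 / u1 ≤ 6.283184)
    (hC : Real.cosh (3.15 * u2) ≤ C)
    (hfin : 0 < 1 - u2^12 - u2^4 * (1 - u1^4) * C)
    (u β : ℝ) (hu : u1 ≤ u) (hu' : u ≤ u2) (hb : π ≤ β) (hb' : β ≤ 3.15) :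
    0 < g u β := by
  have hπl : (3.141592:ℝ) < π := Real.pi_gt_d6
  have hπu : π < 3.141593 := Real.pi_lt_d6
  have hu10 : (0:ℝ) < u1 := by linarith
  have hu0 : (0:ℝ) < u := by linarith
  have hu20 : (0:ℝ) < u2 := by linarith
  have hβ0 : (0:ℝ) ≤ β := by linarith
  obtain ⟨x, hβu⟩ : ∃ x, β / u = x + π := ⟨β / u - π, by ring⟩
  have hx0 : 0 ≤ x := by
    have h1 : π / u ≤ β / u := by gcongr
    have h2 : π ≤ π / u := by
      rw [le_div_iff₀ hu0]; nlinarith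
    linarith
  have hx_pi : x ≤ π := by
    have h1 : β / u ≤ 3.15 / u1 := by gcongr
    linarith
  have hsθ : Real.sin (β / u) = -Real.sin x := by rw [hβu]; exact Real.sin_add_pi x
  have hcθ : Real.cos (β / u) = -Real.cos x := by rw [hβu]; exact Real.cos_add_pi x
  have hsx : 0 ≤ Real.sin x := Real.sin_nonneg_of_nonneg_of_le_pi hx0 hx_pi
  have hch : Real.cosh (β * u) ≤ C := by
    refine le_trans ?_ hC
    rw [Real.cosh_le_cosh, abs_of_nonneg (by positivity), abs_of_nonneg (by positivity)]
    apply mul_le_mul hb' hu' hu0.le (by norm_num)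
  have hshn : (0:ℝ) ≤ Real.sinh (β * u) := by
    rw [Real.sinh_nonneg_iff]; positivity
  have h12 : u^12 ≤ u2^12 := pow_le_pow_left₀ hu0.le hu' 12
  have hu41 : u^4 ≤ 1 := pow_le_one₀ hu0.le (by linarith)
  have h1 : (0:ℝ) ≤ 1 - u^4 := by linarith
  have h2 : u^4 ≤ u2^4 := pow_le_pow_left₀ hu0.le hu' 4
  have h3 : 1 - u^4 ≤ 1 - u1^4 := by
    have := pow_le_pow_left₀ hu10.le hu 4; linarith
  have hu141 : u1^4 ≤ 1 := pow_le_one₀ hu10.le (by linarith)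
  have h4 : (0:ℝ) ≤ u2^4 * (1 - u1^4) := mul_nonneg (by positivity) (by linarith)
  have hA : u^4 * (1 - u^4) * Real.cosh (β * u) ≤ u2^4 * (1 - u1^4) * C :=
    mul_le_mul (mul_le_mul h2 h3 h1 (by positivity)) hch (Real.cosh_pos _).le h4
  have hApos : 0 ≤ u^4 * (1 - u^4) * Real.cosh (β * u) := by
    have h2' := (Real.cosh_pos (β * u)).le
    positivity
  have hterm1 : -(u2^4 * (1 - u1^4) * C)
      ≤ u^4 * (1 - u^4) * Real.cosh (β * u) * (-Real.cos x) := by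
    have hh : u^4 * (1 - u^4) * Real.cosh (β * u) * Real.cos x
        ≤ u^4 * (1 - u^4) * Real.cosh (β * u) :=
      mul_le_of_le_one_right hApos (Real.cos_le_one x)
    nlinarith
  have hterm2 : 0 ≤ 2 * u^6 * Real.sinh (β * u) * Real.sin x := by positivity
  unfold g
  rw [hsθ, hcθ]
  nlinarith [hterm1, hterm2, h12, hfin]

lemma lowRegion (u β : ℝ) (hu0 : 0 ≤ u) (hu' : u ≤ 0.502) (hb : 0 ≤ β) (hb' : β ≤ 5) :
    0 < g u β := by
  have hβu : β * u ≤ 2.51 := by nlinarith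
  have hβu0 : 0 ≤ β * u := by positivity
  have hch : Real.cosh (β * u) ≤ (33263/5000 : ℝ) := by
    refine le_trans ?_ (cosh_ub4 (x := 2.51) (by norm_num) (by norm_num) (by norm_num))
    rw [Real.cosh_le_cosh, abs_of_nonneg hβu0, abs_of_nonneg (by norm_num)]
    exact hβu
  have hsh : Real.sinh (β * u) ≤ (30763/5000 : ℝ) := by
    refine le_trans ?_ (sinh_ub4 (x := 2.51) (by norm_num) (by norm_num) (by norm_num))
    rw [Real.sinh_le_sinh]; exact hβu
  have hshn : (0:ℝ) ≤ Real.sinh (β * u) := by rw [Real.sinh_nonneg_iff]; exact hβu0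
  have hu41 : u^4 ≤ 1 := pow_le_one₀ hu0 (by linarith)
  have h1 : (0:ℝ) ≤ 1 - u^4 := by linarith
  have h4 : u^4 ≤ (0.502:ℝ)^4 := pow_le_pow_left₀ hu0 hu' 4
  have h6 : u^6 ≤ (0.502:ℝ)^6 := pow_le_pow_left₀ hu0 hu' 6
  have h12 : u^12 ≤ (0.502:ℝ)^12 := pow_le_pow_left₀ hu0 hu' 12
  have hApos : 0 ≤ u^4 * (1 - u^4) * Real.cosh (β * u) := by
    have h2' := (Real.cosh_pos (β * u)).le
    positivity
  have hA : u^4 * (1 - u^4) * Real.cosh (β * u) ≤ (0.502:ℝ)^4 * (33263/5000) := by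
    have : u^4 * (1 - u^4) ≤ (0.502:ℝ)^4 := by nlinarith
    have := mul_le_mul this hch (Real.cosh_pos _).le (by norm_num)
    linarith
  have hterm1 : -((0.502:ℝ)^4 * (33263/5000))
      ≤ u^4 * (1 - u^4) * Real.cosh (β * u) * Real.cos (β / u) := by
    have hc1 : -1 ≤ Real.cos (β / u) := Real.neg_one_le_cos (β / u)
    nlinarith
  have hQ : 2 * u^6 * Real.sinh (β * u) ≤ 2 * (0.502:ℝ)^6 * (30763/5000) := by
    have := mul_le_mul h6 hsh hshn (by norm_num : (0:ℝ) ≤ (0.502:ℝ)^6)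
    linarith
  have hQ0 : 0 ≤ 2 * u^6 * Real.sinh (β * u) := by positivity
  have hterm2 : -(2 * (0.502:ℝ)^6 * (30763/5000))
      ≤ -(2 * u^6 * Real.sinh (β * u) * Real.sin (β / u)) := by
    have hs1 : Real.sin (β / u) ≤ 1 := Real.sin_le_one (β / u)
    nlinarith
  unfold g
  nlinarith [hterm1, hterm2, h12]

lemma cornerRegion (u β : ℝ) (hu : (0.98:ℝ) ≤ u) (hu' : u ≤ 1) (hb : π < β) (hb' : β ≤ 3.15) :
    0 < g u β := by
  have hπl : (3.141592:ℝ) < π := Real.pi_gt_d6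
  have hπu : π < 3.141593 := Real.pi_lt_d6
  have hu0 : (0:ℝ) < u := by linarith
  have hβ0 : (0:ℝ) < β := by linarith
  obtain ⟨x, hβu⟩ : ∃ x, β / u = x + π := ⟨β / u - π, by ring⟩
  have hfl : (β - π * u) / u = β / u - π := by field_simp
  have hxeq : x = (β - π * u) / u := by rw [hfl, hβu]; ring
  have hnum : 0 < β - π * u := by nlinarith
  have hx_lb : (β - π) + π * (1 - u) ≤ x := by
    have h1 : β - π * u ≤ (β - π * u) / u := by
      rw [le_div_iff₀ hu0]; nlinarith
    rw [hxeq]; nlinarith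
  have hx0 : 0 < x := by nlinarith
  have hx_hi : x ≤ 0.0727 := by
    have h1 : β / u ≤ 3.15 / 0.98 := by gcongr
    have : x = β / u - π := by rw [hβu]; ring
    rw [this]
    have : (3.15:ℝ) / 0.98 ≤ 3.2142858 := by norm_num
    linarith
  have hsθ : Real.sin (β / u) = -Real.sin x := by rw [hβu]; exact Real.sin_add_pi x
  have hcθ : Real.cos (β / u) = -Real.cos x := by rw [hβu]; exact Real.cos_add_pi x
  -- sin x ≥ 0.998 x
  have hsinx : (0.998:ℝ) * x ≤ Real.sin x := by
    have h1 := Real.sin_gt_sub_cube hx0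
    nlinarith [sq_nonneg x]
  -- hyperbolic bounds
  have hch : Real.cosh (β * u) ≤ (30421/2500:ℝ) := by
    refine le_trans ?_ (cosh_ub4 (x := 3.15) (by norm_num) (by norm_num) (by norm_num))
    rw [Real.cosh_le_cosh, abs_of_nonneg (by positivity), abs_of_nonneg (by norm_num)]
    nlinarith
  have hsh : (25881/2500:ℝ) ≤ Real.sinh (β * u) := by
    refine le_trans (sinh_lb4 (x := 3.141592*0.98) (by norm_num) (by norm_num) (by norm_num)) ?_
    rw [Real.sinh_le_sinh]; nlinarith
  have hshn : (0:ℝ) ≤ Real.sinh (β * u) := by linarith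
  -- term 2 lower bound:  2 u^6 sinh sin x ≥ 18.2 * x
  have h6 : (0.98:ℝ)^6 ≤ u^6 := pow_le_pow_left₀ (by norm_num) hu 6
  have hterm2 : (18.2:ℝ) * x ≤ 2 * u^6 * Real.sinh (β * u) * Real.sin x := by
    have m1 : 2 * (0.98:ℝ)^6 * (25881/2500) ≤ 2 * u^6 * Real.sinh (β * u) := by
      have := mul_le_mul h6 hsh (by norm_num) (by positivity : (0:ℝ) ≤ u^6)
      linarith
    have m2 : 2 * (0.98:ℝ)^6 * (25881/2500) * (0.998 * x)
        ≤ 2 * u^6 * Real.sinh (β * u) * Real.sin x := by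
      apply mul_le_mul m1 hsinx (by nlinarith) (by positivity)
    nlinarith
  -- term 1 lower bound
  have hu41 : u^4 ≤ 1 := pow_le_one₀ hu0.le hu'
  have h1u4 : (0:ℝ) ≤ 1 - u^4 := by linarith
  have hsq : u^2 ≤ 1 := pow_le_one₀ hu0.le hu'
  have hcb : u^3 ≤ 1 := pow_le_one₀ hu0.le hu'
  have h4u : 1 - u^4 ≤ 4 * (1 - u) := by
    nlinarith [mul_nonneg (sub_nonneg.mpr hu') (show (0:ℝ) ≤ 3 - u - u^2 - u^3 by nlinarith)]
  have hApos : 0 ≤ u^4 * (1 - u^4) * Real.cosh (β * u) := by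
    have h2' := (Real.cosh_pos (β * u)).le
    positivity
  have hA : u^4 * (1 - u^4) * Real.cosh (β * u) ≤ 4 * (1 - u) * (30421/2500:ℝ) := by
    have s1 : u^4 * (1 - u^4) ≤ 4 * (1 - u) := by nlinarith
    have := mul_le_mul s1 hch (Real.cosh_pos _).le (by nlinarith)
    linarith
  have hterm1 : -(4 * (1 - u) * (30421/2500:ℝ))
      ≤ u^4 * (1 - u^4) * Real.cosh (β * u) * (-Real.cos x) := by
    have hh : u^4 * (1 - u^4) * Real.cosh (β * u) * Real.cos x
        ≤ u^4 * (1 - u^4) * Real.cosh (β * u) :=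
      mul_le_of_le_one_right hApos (Real.cos_le_one x)
    nlinarith
  have h12 : u^12 ≤ 1 := pow_le_one₀ hu0.le hu'
  unfold g
  rw [hsθ, hcθ]
  -- g ≥ 18.2*((β-π) + π(1-u)) - 4(1-u)*C + (1-u^12)
  -- coefficient of (1-u): 18.2*3.141592 - 4*12.1684 = 8.50 > 0
  nlinarith [hterm1, hterm2, hx_lb, h12, hb, hu']

lemma pos315 (u β : ℝ) (hu0 : 0 ≤ u) (hu1 : u ≤ 1) (hb : π < β) (hb' : β ≤ 3.15) :
    0 < g u β := by
  have hb0 : π ≤ β := hb.le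
  have hπl : (3.141592:ℝ) < π := Real.pi_gt_d6
  rcases le_or_gt u 0.502 with h0 | h0
  · exact lowRegion u β hu0 h0 (by linarith) (by linarith)
  rcases le_or_gt u 0.67 with h1 | h1
  · exact boxM1 0.502 0.67 (46263/10000) (by norm_num) (by norm_num) (by norm_num)
      (by norm_num) (by apply cosh_ub4 <;> norm_num) (by norm_num) u β h0.le h1 hb0 hb'
  rcases le_or_gt u 0.70 with h2 | h2
  · exact boxM2 0.67 0.70 1 (3147/625) (36023/10000) (by norm_num) (by norm_num)
      (by norm_num) (by norm_num) (by norm_num) (by norm_num) (by norm_num) (by norm_num)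
      (by apply cosh_ub4 <;> norm_num) (by apply sinh_lb4 <;> norm_num) (by norm_num)
      u β h1.le h2 hb0 hb'
  rcases le_or_gt u 0.73 with h3 | h3
  · exact boxM2 0.70 0.73 1 (54847/10000) (10019/2500) (by norm_num) (by norm_num)
      (by norm_num) (by norm_num) (by norm_num) (by norm_num) (by norm_num) (by norm_num)
      (by apply cosh_ub4 <;> norm_num) (by apply sinh_lb4 <;> norm_num) (by norm_num)
      u β h2.le h3 hb0 hb'
  rcases le_or_gt u 0.76 with h4 | h4
  · exact boxM2 0.73 0.76 (124/125) (59787/10000) (2783/625) (by norm_num) (by norm_num)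
      (by norm_num) (by norm_num) (by norm_num) (by norm_num) (by norm_num) (by norm_num)
      (by apply cosh_ub4 <;> norm_num) (by apply sinh_lb4 <;> norm_num) (by norm_num)
      u β h3.le h4 hb0 hb'
  rcases le_or_gt u 0.79 with h5 | h5
  · exact boxM2 0.76 0.79 (8351/10000) (65217/10000) (2471/500) (by norm_num) (by norm_num)
      (by norm_num) (by norm_num) (by norm_num) (by norm_num) (by norm_num) (by norm_num)
      (by apply cosh_ub4 <;> norm_num) (by apply sinh_lb4 <;> norm_num) (by norm_num)
      u β h4.le h5 hb0 hb'
  rcases le_or_gt u 0.82 with h6 | h6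
  · exact boxM2 0.79 0.82 (431/625) (14237/2000) (27397/5000) (by norm_num) (by norm_num)
      (by norm_num) (by norm_num) (by norm_num) (by norm_num) (by norm_num) (by norm_num)
      (by apply cosh_ub4 <;> norm_num) (by apply sinh_lb4 <;> norm_num) (by norm_num)
      u β h5.le h6 hb0 hb'
  rcases le_or_gt u 0.85 with h7 | h7
  · exact boxM2 0.82 0.85 (5543/10000) (15549/2000) (30349/5000) (by norm_num) (by norm_num)
      (by norm_num) (by norm_num) (by norm_num) (by norm_num) (by norm_num) (by norm_num)
      (by apply cosh_ub4 <;> norm_num) (by apply sinh_lb4 <;> norm_num) (by norm_num)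
      u β h6.le h7 hb0 hb'
  rcases le_or_gt u 0.88 with h8 | h8
  · exact boxM2 0.85 0.88 (4283/10000) (16991/2000) (67183/10000) (by norm_num) (by norm_num)
      (by norm_num) (by norm_num) (by norm_num) (by norm_num) (by norm_num) (by norm_num)
      (by apply cosh_ub4 <;> norm_num) (by apply sinh_lb4 <;> norm_num) (by norm_num)
      u β h7.le h8 hb0 hb'
  rcases le_or_gt u 0.90 with h9 | h9
  · exact boxM2 0.88 0.90 (349/1000) (45077/5000) (18577/2500) (by norm_num) (by norm_num)
      (by norm_num) (by norm_num) (by norm_num) (by norm_num) (by norm_num) (by norm_num)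
      (by apply cosh_ub4 <;> norm_num) (by apply sinh_lb4 <;> norm_num) (by norm_num)
      u β h8.le h9 hb0 hb'
  rcases le_or_gt u 0.92 with h10 | h10
  · exact boxM2 0.90 0.92 (2731/10000) (23923/2500) (19861/2500) (by norm_num) (by norm_num)
      (by norm_num) (by norm_num) (by norm_num) (by norm_num) (by norm_num) (by norm_num)
      (by apply cosh_ub4 <;> norm_num) (by apply sinh_lb4 <;> norm_num) (by norm_num)
      u β h9.le h10 hb0 hb'
  rcases le_or_gt u 0.94 with h11 | h11
  · exact boxM2 0.92 0.94 (401/2000) (101589/10000) (84911/10000) (by norm_num) (by norm_num)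
      (by norm_num) (by norm_num) (by norm_num) (by norm_num) (by norm_num) (by norm_num)
      (by apply cosh_ub4 <;> norm_num) (by apply sinh_lb4 <;> norm_num) (by norm_num)
      u β h10.le h11 hb0 hb'
  rcases le_or_gt u 0.95 with h12 | h12
  · exact boxM2 0.94 0.95 (1653/10000) (2617/250) (22683/2500) (by norm_num) (by norm_num)
      (by norm_num) (by norm_num) (by norm_num) (by norm_num) (by norm_num) (by norm_num)
      (by apply cosh_ub4 <;> norm_num) (by apply sinh_lb4 <;> norm_num) (by norm_num)
      u β h11.le h12 hb0 hb'
  rcases le_or_gt u 0.96 with h13 | h13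
  · exact boxM2 0.95 0.96 (327/2500) (10787/1000) (93781/10000) (by norm_num) (by norm_num)
      (by norm_num) (by norm_num) (by norm_num) (by norm_num) (by norm_num) (by norm_num)
      (by apply cosh_ub4 <;> norm_num) (by apply sinh_lb4 <;> norm_num) (by norm_num)
      u β h12.le h13 hb0 hb'
  rcases le_or_gt u 0.97 with h14 | h14
  · exact boxM2 0.96 0.97 (971/10000) (55581/5000) (6058/625) (by norm_num) (by norm_num)
      (by norm_num) (by norm_num) (by norm_num) (by norm_num) (by norm_num) (by norm_num)
      (by apply cosh_ub4 <;> norm_num) (by apply sinh_lb4 <;> norm_num) (by norm_num)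
      u β h13.le h14 hb0 hb'
  rcases le_or_gt u 0.98 with h15 | h15
  · exact boxM2 0.97 0.98 (641/10000) (114559/10000) (50087/5000) (by norm_num) (by norm_num)
      (by norm_num) (by norm_num) (by norm_num) (by norm_num) (by norm_num) (by norm_num)
      (by apply cosh_ub4 <;> norm_num) (by apply sinh_lb4 <;> norm_num) (by norm_num)
      u β h14.le h15 hb0 hb'
  · exact cornerRegion u β h15.le hu1 hb hb'

lemma witness_neg : g (1.96/π) 4.9 < 0 := by
  have hπl : (3.141592:ℝ) < π := Real.pi_gt_d6
  have hπu : π < 3.141593 := Real.pi_lt_d6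
  have hπ0 : π ≠ 0 := by positivity
  have hdiv : (4.9:ℝ) / (1.96/π) = π/2 + 2*π := by
    field_simp
    ring
  have hcos : Real.cos ((4.9:ℝ) / (1.96/π)) = 0 := by
    rw [hdiv, Real.cos_add_two_pi, Real.cos_pi_div_two]
  have hsin : Real.sin ((4.9:ℝ) / (1.96/π)) = 1 := by
    rw [hdiv, Real.sin_add_two_pi, Real.sin_pi_div_two]
  have hmul : (4.9:ℝ) * (1.96/π) = 9.604/π := by
    rw [mul_div_assoc']; norm_num
  have hq : (3.057:ℝ) ≤ 9.604/π := by
    rw [le_div_iff₀ Real.pi_pos]; nlinarith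
  have hsh : (101193/10000:ℝ) ≤ Real.sinh (9.604/π) := by
    refine le_trans (sinh_lb4 (x := 3.057) (by norm_num) (by norm_num) (by norm_num)) ?_
    rw [Real.sinh_le_sinh]; exact hq
  have hu0b : (0.6238:ℝ) ≤ 1.96/π := by
    rw [le_div_iff₀ Real.pi_pos]; nlinarith
  have h6 : (0.6238:ℝ)^6 ≤ (1.96/π)^6 := pow_le_pow_left₀ (by norm_num) hu0b 6
  have hterm : 2*(0.6238:ℝ)^6*(101193/10000) ≤ 2*(1.96/π)^6*Real.sinh (9.604/π) := by
    have := mul_le_mul h6 hsh (by norm_num) (by positivity : (0:ℝ) ≤ (1.96/π)^6)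
    linarith
  have h12 : (0:ℝ) ≤ (1.96/π)^12 := by positivity
  unfold g
  rw [hcos, hsin, hmul]
  nlinarith [hterm, h12]

theorem stmt_19 :
    ∃ βs : ℝ, Real.pi < βs ∧ βs < 5 ∧
      ∃ us : ℝ, 0 < us ∧ us < 1 ∧ g us βs = 0 ∧
        ∀ u : ℝ, 0 ≤ u → u ≤ 1 → ∀ β : ℝ, Real.pi < β → β < βs → 0 < g u β := by
  have hπl : (3.141592:ℝ) < π := Real.pi_gt_d6
  have hπu : π < 3.141593 := Real.pi_lt_d6
  -- the compact box
  set box : Set (ℝ × ℝ) := Set.Icc (0.5, 3.15) (1, 4.9) with hbox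
  have hboxmem : ∀ p : ℝ × ℝ, p ∈ box ↔
      (0.5 ≤ p.1 ∧ 3.15 ≤ p.2) ∧ p.1 ≤ 1 ∧ p.2 ≤ 4.9 := by
    intro p
    rw [hbox, Set.mem_Icc, Prod.le_def, Prod.le_def]
  -- continuity of g on the box
  have hGc : ContinuousOn (fun p : ℝ × ℝ => g p.1 p.2) box := by
    have hne : ∀ p : ℝ × ℝ, p ∈ box → p.1 ≠ 0 := by
      intro p hp
      rw [hboxmem] at hp
      have : (0.5:ℝ) ≤ p.1 := hp.1.1
      exact ne_of_gt (by linarith)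
    have hfst : ContinuousOn (fun p : ℝ × ℝ => p.1) box := continuous_fst.continuousOn
    have hsnd : ContinuousOn (fun p : ℝ × ℝ => p.2) box := continuous_snd.continuousOn
    have hdiv : ContinuousOn (fun p : ℝ × ℝ => p.2 / p.1) box := hsnd.div hfst hne
    have hmulc : ContinuousOn (fun p : ℝ × ℝ => p.2 * p.1) box := hsnd.mul hfst
    have ccosh : ContinuousOn (fun p : ℝ × ℝ => Real.cosh (p.2 * p.1)) box :=
      Real.continuous_cosh.comp_continuousOn hmulc
    have csinh : ContinuousOn (fun p : ℝ × ℝ => Real.sinh (p.2 * p.1)) box :=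
      Real.continuous_sinh.comp_continuousOn hmulc
    have ccos : ContinuousOn (fun p : ℝ × ℝ => Real.cos (p.2 / p.1)) box :=
      Real.continuous_cos.comp_continuousOn hdiv
    have csin : ContinuousOn (fun p : ℝ × ℝ => Real.sin (p.2 / p.1)) box :=
      Real.continuous_sin.comp_continuousOn hdiv
    simp only [g]
    exact ((((((hfst.pow 4).mul (continuousOn_const.sub (hfst.pow 4))).mul ccosh).mul ccos).sub
      (((continuousOn_const.mul (hfst.pow 6)).mul csinh).mul csin)).add
        continuousOn_const).sub (hfst.pow 12)
  -- the compact set of "bad" points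
  set K : Set (ℝ × ℝ) := box ∩ (fun p : ℝ × ℝ => g p.1 p.2) ⁻¹' Set.Iic 0 with hK
  have hKclosed : IsClosed K :=
    hGc.preimage_isClosed_of_isClosed isClosed_Icc isClosed_Iic
  have hKcp : IsCompact K :=
    IsCompact.of_isClosed_subset isCompact_Icc hKclosed Set.inter_subset_left
  set S : Set ℝ := Prod.snd '' K with hS
  have hScp : IsCompact S := hKcp.image continuous_snd
  -- the witness point
  have hu0mem : (0.5:ℝ) ≤ 1.96/π ∧ (1.96:ℝ)/π ≤ 1 := by
    constructor
    · rw [le_div_iff₀ Real.pi_pos]; nlinarith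
    · rw [div_le_one Real.pi_pos]; nlinarith
  have hp0 : ((1.96/π, 4.9) : ℝ × ℝ) ∈ K := by
    rw [hK]
    constructor
    · rw [hboxmem]
      exact ⟨⟨hu0mem.1, by norm_num⟩, hu0mem.2, by norm_num⟩
    · exact Set.mem_preimage.mpr (Set.mem_Iic.mpr witness_neg.le)
  have hSne : S.Nonempty := ⟨4.9, (1.96/π, 4.9), hp0, rfl⟩
  set βs : ℝ := sInf S with hβs
  have hβsmem : βs ∈ S := hScp.sInf_mem hSne
  have hlbS : ∀ b ∈ S, βs ≤ b := fun b hb => csInf_le hScp.bddBelow hb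
  obtain ⟨ps, hpsK, hps2⟩ := hβsmem
  set us : ℝ := ps.1 with hus
  have hpsbox := hpsK.1
  rw [hboxmem] at hpsbox
  have hus05 : (0.5:ℝ) ≤ us := hpsbox.1.1
  have hus1 : us ≤ 1 := hpsbox.2.1
  have hβs315 : (3.15:ℝ) ≤ βs := by rw [← hps2]; exact hpsbox.1.2
  have hβs49 : βs ≤ 4.9 := by rw [← hps2]; exact hpsbox.2.2
  have hgle : g us βs ≤ 0 := by
    have := hpsK.2
    simp only [Set.mem_preimage, Set.mem_Iic] at this
    rw [← hps2]; exact this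
  -- βs > 3.15
  have h315lt : (3.15:ℝ) < βs := by
    rcases lt_or_eq_of_le hβs315 with h | h
    · exact h
    · exfalso
      have hpos := pos315 us 3.15 (by linarith) hus1 (by linarith) le_rfl
      rw [← h] at hgle
      linarith
  -- g us βs = 0
  have hgeq : g us βs = 0 := by
    by_contra hne0
    have hlt : g us βs < 0 := lt_of_le_of_ne hgle hne0
    have hcont : Continuous (fun b => g us b) := by
      simp only [g]
      have h1 : Continuous fun b : ℝ => b * us := continuous_id.mul continuous_const
      have h2 : Continuous fun b : ℝ => b / us := continuous_id.div_const us
      fun_prop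
    have hopen : IsOpen {b : ℝ | g us b < 0} := isOpen_lt hcont continuous_const
    obtain ⟨ε, hε, hball⟩ := Metric.isOpen_iff.mp hopen βs hlt
    set b' : ℝ := max 3.15 (βs - ε/2) with hb'
    have hb'lt : b' < βs := max_lt h315lt (by linarith)
    have hb'mem : b' ∈ Metric.ball βs ε := by
      rw [Metric.mem_ball, Real.dist_eq, abs_lt]
      have := le_max_right (3.15:ℝ) (βs - ε/2)
      constructor <;> [linarith; linarith]
    have hgb' : g us b' < 0 := hball hb'mem
    have hbK : ((us, b') : ℝ × ℝ) ∈ K := by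
      rw [hK]
      refine ⟨?_, Set.mem_preimage.mpr (Set.mem_Iic.mpr hgb'.le)⟩
      rw [hboxmem]
      exact ⟨⟨hus05, le_max_left _ _⟩, hus1, by linarith⟩
    exact absurd (hlbS b' ⟨(us, b'), hbK, rfl⟩) (not_le.mpr hb'lt)
  -- us < 1
  have hsinneg : Real.sin βs < 0 := by
    have h1 : Real.sin ((βs - π) + π) = -Real.sin (βs - π) := Real.sin_add_pi (βs - π)
    have h2 : 0 < Real.sin (βs - π) :=
      Real.sin_pos_of_pos_of_lt_pi (by linarith) (by linarith)
    have h3 : (βs - π) + π = βs := by ring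
    rw [h3] at h1
    linarith
  have hsinhpos : 0 < Real.sinh βs := by
    rw [← Real.sinh_zero]
    exact Real.sinh_lt_sinh.mpr (by linarith)
  have hg1 : 0 < g 1 βs := by
    unfold g
    rw [mul_one, div_one]
    norm_num
    nlinarith [mul_pos hsinhpos (neg_pos.mpr hsinneg)]
  have husne : us ≠ 1 := by
    intro h
    rw [h] at hgeq
    linarith
  have hus_lt1 : us < 1 := lt_of_le_of_ne hus1 husne
  -- assemble
  refine ⟨βs, by linarith, by linarith, us, by linarith, hus_lt1, hgeq, ?_⟩
  intro u hu0 hu1 β hbπ hblt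
  rcases le_or_gt β 3.15 with hble | hbgt
  · exact pos315 u β hu0 hu1 hbπ hble
  rcases le_or_gt u 0.5 with hule | hugt
  · exact lowRegion u β hu0 (by linarith) (by linarith) (by linarith)
  by_contra hng
  push_neg at hng
  have hK' : ((u, β) : ℝ × ℝ) ∈ K := by
    rw [hK]
    refine ⟨?_, Set.mem_preimage.mpr (Set.mem_Iic.mpr hng)⟩
    rw [hboxmem]
    exact ⟨⟨hugt.le, hbgt.le⟩, hu1, by linarith⟩
  exact absurd (hlbS β ⟨(u, β), hK', rfl⟩) (not_le.mpr hblt)
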